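/- Let A be an associative unital ℂ-algebra, ℓ an integer with ℓ > 2, and ε ∈ ℂ a primitive ℓ-th root of unity. Suppose a, b, c, d ∈ A satisfy the fun_ε(GL₂) relations: a·b = ε·b·a, a·c = ε·c·a, b·d = ε·d·b, c·d = ε·d·c, b·c = c·b, a·d − d·a = (ε − ε⁻¹)·b·c. Then each of the elements a^ℓ, b^ℓ, c^ℓ, d^ℓ commutes with each of a, b, c, d; in particular a^ℓ, b^ℓ, c^ℓ, d^ℓ are central in the subalgebra generated by a, b, c, d. (A key step is the identity aⁿ·d = d·aⁿ + (ε − ε⁻¹)·εⁿ⁻¹·[n]_ε·b·c·aⁿ⁻¹ for n ≥ 1, together with [ℓ]_ε = 0.) -/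

import Mathlib

lemma qpow_comm {A : Type*} [Ring A] [Algebra ℂ A] (μ : ℂ) (x y : A)
    (h : x * y = μ • (y * x)) (n : ℕ) : x ^ n * y = μ ^ n • (y * x ^ n) := by
  induction n with
  | zero => simp
  | succ n ih =>
    rw [pow_succ, mul_assoc, h, mul_smul_comm, ← mul_assoc, ih, smul_mul_assoc,
      mul_assoc, smul_smul, ← pow_succ, ← pow_succ']

lemma ad_pow {A : Type*} [Ring A] [Algebra ℂ A] (μ : ℂ) (hμ : μ ≠ 0)
    (a b c d : A)
    (hab : a * b = μ • (b * a))
    (hac : a * c = μ • (c * a))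
    (had : a * d - d * a = (μ - μ⁻¹) • (b * c)) (n : ℕ) :
    a ^ (n + 1) * d = d * a ^ (n + 1)
      + ((μ ^ (n + 1) - μ⁻¹ ^ (n + 1)) * μ ^ n) • (b * c * a ^ n) := by
  have had' : a * d = d * a + (μ - μ⁻¹) • (b * c) := by
    rw [← had]; abel
  have habc : a * (b * c) = (μ * μ) • (b * c * a) := by
    calc a * (b * c) = (a * b) * c := (mul_assoc _ _ _).symm
      _ = μ • (b * (a * c)) := by rw [hab, smul_mul_assoc, mul_assoc]
      _ = μ • (b * (μ • (c * a))) := by rw [hac]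
      _ = (μ * μ) • (b * c * a) := by rw [mul_smul_comm, smul_smul, mul_assoc]
  induction n with
  | zero => simpa using had'
  | succ n ih =>
    have h2 : a ^ (n + 2) * d = a * (a ^ (n + 1) * d) := by
      rw [← mul_assoc, ← pow_succ']
    rw [h2, ih, mul_add, ← mul_assoc, had', mul_smul_comm, ← mul_assoc, habc]
    simp only [add_mul, smul_mul_assoc, smul_smul, mul_assoc, pow_succ', inv_pow]
    match_scalars <;> field_simp <;> ring

theorem funqGL2_lth_powers_central
    {A : Type*} [Ring A] [Algebra ℂ A]
    (ℓ : ℕ) (hl : 2 < ℓ) (ε : ℂ) (hε : IsPrimitiveRoot ε ℓ)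
    (a b c d : A)
    (hab : a * b = ε • (b * a))
    (hac : a * c = ε • (c * a))
    (hbd : b * d = ε • (d * b))
    (hcd : c * d = ε • (d * c))
    (hbc : b * c = c * b)
    (had : a * d - d * a = (ε - ε⁻¹) • (b * c)) :
    ∀ x ∈ ({a, b, c, d} : Set A), ∀ y ∈ ({a, b, c, d} : Set A),
      Commute (x ^ ℓ) y := by
  have hl0 : ℓ ≠ 0 := by omega
  have hε0 : ε ≠ 0 := hε.ne_zero hl0
  have hεl : ε ^ ℓ = 1 := hε.pow_eq_one
  have hεil : (ε⁻¹) ^ ℓ = 1 := by rw [inv_pow, hεl, inv_one]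
  have inv_rel : ∀ x y : A, x * y = ε • (y * x) → y * x = ε⁻¹ • (x * y) := by
    intro x y h
    rw [h, smul_smul, inv_mul_cancel₀ hε0, one_smul]
  have qc : ∀ x y : A, x * y = ε • (y * x) → Commute (x ^ ℓ) y := by
    intro x y h
    show x ^ ℓ * y = y * x ^ ℓ
    rw [qpow_comm ε x y h, hεl, one_smul]
  have qci : ∀ x y : A, x * y = ε⁻¹ • (y * x) → Commute (x ^ ℓ) y := by
    intro x y h
    show x ^ ℓ * y = y * x ^ ℓ
    rw [qpow_comm ε⁻¹ x y h, hεil, one_smul]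
  have key : ∀ (μ : ℂ), μ ≠ 0 → μ ^ ℓ = 1 → ∀ x y z w : A,
      x * y = μ • (y * x) → x * z = μ • (z * x) →
      x * w - w * x = (μ - μ⁻¹) • (y * z) → Commute (x ^ ℓ) w := by
    intro μ hμ hμl x y z w hxy hxz hxw
    show x ^ ℓ * w = w * x ^ ℓ
    obtain ⟨m, rfl⟩ : ∃ m, ℓ = m + 1 := ⟨ℓ - 1, by omega⟩
    rw [ad_pow μ hμ x y z w hxy hxz hxw m, hμl]
    have h1 : (μ⁻¹) ^ (m + 1) = 1 := by rw [inv_pow, hμl, inv_one]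
    rw [h1, sub_self, zero_mul, zero_smul, add_zero]
  have hεi0 : (ε⁻¹ : ℂ) ≠ 0 := inv_ne_zero hε0
  have hAD : Commute (a ^ ℓ) d := key ε hε0 hεl a b c d hab hac had
  have hDA : Commute (d ^ ℓ) a := by
    apply key ε⁻¹ hεi0 hεil d c b a (inv_rel c d hcd) (inv_rel b d hbd)
    rw [inv_inv, ← hbc, ← neg_sub (a * d) (d * a), had, ← neg_smul, neg_sub]
  intro x hx y hy
  simp only [Set.mem_insert_iff, Set.mem_singleton_iff] at hx hy
  rcases hx with rfl | rfl | rfl | rfl <;> rcases hy with rfl | rfl | rfl | rfl <;>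
    first
      | exact (Commute.refl _).pow_left ℓ
      | exact hAD
      | exact hDA
      | exact Commute.pow_left hbc ℓ
      | exact Commute.pow_left hbc.symm ℓ
      | exact qc _ _ hab
      | exact qc _ _ hac
      | exact qc _ _ hbd
      | exact qc _ _ hcd
      | exact qci _ _ (inv_rel _ _ hab)
      | exact qci _ _ (inv_rel _ _ hac)
      | exact qci _ _ (inv_rel _ _ hbd)
      | exact qci _ _ (inv_rel _ _ hcd)
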